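/- Performance-difference lemma: in a finite-horizon MDP with horizon H, for any two policies π and π′, V₁^π(s₁) − V₁^{π′}(s₁) = E_π[Σ_{h=1}^H (π_h − π′_h) Q_h^{π′}(s_h)], where (π_h − π′_h) Q_h^{π′}(s) = Σ_a (π_h(a|s) − π′_h(a|s)) Q_h^{π′}(s,a) and the expectation is over trajectories generated by π. -/
import Mathlib


open Finset Real

def IsKernel {S A : Type*} [Fintype S] (P : ℕ → S → A → S → ℝ) : Prop :=
  ∀ h s a, (∀ s', 0 ≤ P h s a s') ∧ ∑ s', P h s a s' = 1

def IsPolicy {S A : Type*} [Fintype A] (p : ℕ → S → A → ℝ) : Prop :=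
  ∀ h s, (∀ a, 0 ≤ p h s a) ∧ ∑ a, p h s a = 1

/-- Value function of a policy (backward recursion on remaining steps `n`, current step `h`). -/
noncomputable def val {S A : Type*} [Fintype S] [Fintype A]
    (P : ℕ → S → A → S → ℝ) (r : ℕ → S → A → ℝ) (p : ℕ → S → A → ℝ) :
    ℕ → ℕ → S → ℝ
  | 0, _, _ => 0
  | n + 1, h, s =>
      ∑ a, p h s a * (r h s a + ∑ s', P h s a s' * val P r p n (h + 1) s')

/-- Expected sum `E_p[Σ_h g(h, s_h)]` along a trajectory generated by policy `p`. -/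
noncomputable def expSum {S A : Type*} [Fintype S] [Fintype A]
    (P : ℕ → S → A → S → ℝ) (p : ℕ → S → A → ℝ) (g : ℕ → S → ℝ) :
    ℕ → ℕ → S → ℝ
  | 0, _, _ => 0
  | n + 1, h, s =>
      g h s + ∑ a, p h s a * ∑ s', P h s a s' * expSum P p g n (h + 1) s'

/-- Performance-difference lemma:
`V₁^π(s₁) − V₁^{π'}(s₁) = E_π[Σ_{h=1}^H (π_h − π'_h) Q_h^{π'}(s_h)]`, where
`Q_h^{π'}(s,a) = r_h(s,a) + p_h V_{h+1}^{π'}(s,a)`. -/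
theorem performance_difference {S A : Type*} [Fintype S] [Fintype A]
    (H : ℕ) (P : ℕ → S → A → S → ℝ) (r : ℕ → S → A → ℝ) (p q : ℕ → S → A → ℝ) (s₁ : S)
    (hP : IsKernel P) (hp : IsPolicy p) (hq : IsPolicy q) :
    val P r p H 0 s₁ - val P r q H 0 s₁ =
      expSum P p
        (fun h s => ∑ a, (p h s a - q h s a) *
          (r h s a + ∑ s', P h s a s' * val P r q (H - (h + 1)) (h + 1) s'))
        H 0 s₁ := by
  have key : ∀ n h, h + n = H → ∀ s,
      val P r p n h s - val P r q n h s =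
      expSum P p
        (fun h s => ∑ a, (p h s a - q h s a) *
          (r h s a + ∑ s', P h s a s' * val P r q (H - (h + 1)) (h + 1) s'))
        n h s := by
    intro n
    induction n with
    | zero => intro h _ s; simp [_root_.val, expSum]
    | succ n ih =>
      intro h hh s
      have hH : H - (h + 1) = n := by omega
      have ih' : ∀ s', expSum P p
          (fun h s => ∑ a, (p h s a - q h s a) *
            (r h s a + ∑ s', P h s a s' * val P r q (H - (h + 1)) (h + 1) s'))
          n (h + 1) s' = val P r p n (h + 1) s' - val P r q n (h + 1) s' :=
        fun s' => (ih (h + 1) (by omega) s').symm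
      simp only [_root_.val, expSum, hH]
      simp only [ih']
      rw [← Finset.sum_sub_distrib, ← Finset.sum_add_distrib]
      refine Finset.sum_congr rfl fun a _ => ?_
      have : ∑ s', P h s a s' * (val P r p n (h + 1) s' - val P r q n (h + 1) s') =
          (∑ s', P h s a s' * val P r p n (h + 1) s') -
          ∑ s', P h s a s' * val P r q n (h + 1) s' := by
        rw [← Finset.sum_sub_distrib]
        exact Finset.sum_congr rfl fun s' _ => mul_sub _ _ _
      rw [this]; ring
  exact key H 0 (by omega) s₁
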